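/- arXiv:1910.14412 — 4 statements merged into one kernel-verified Lean document; each statement's English description precedes it below -/
import Mathlib

section
/- For complex numbers r_1, …, r_k and l ∈ {0, 1, …, k}, let Ψ_l be the k×k matrix whose rows are indexed by i ∈ {1,…,k} and whose columns are the powers r_i^m for m ∈ {0,1,…,k} \ {k−l} (in increasing order of m). Then det(Ψ_l) = e_l(r_1,…,r_k) · ∏_{1 ≤ n < m ≤ k} (r_m − r_n), where e_l is the l-th elementary symmetric polynomial. -/
open Finset Polynomial Matrix

private lemma gsd_prod_Ioi_castSucc {R : Type*} [CommRing R] {k : ℕ} (i : Fin k)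
    (f : Fin (k + 1) → R) :
    ∏ j ∈ Finset.Ioi i.castSucc, f j =
      (∏ j ∈ Finset.Ioi i, f j.castSucc) * f (Fin.last k) := by
  have h1 : ∀ a : Fin k, (Fin.castSuccEmb a : Fin (k + 1)) = a.castSucc := fun a => rfl
  have h2 : Finset.Ioi i.castSucc = insert (Fin.last k) ((Finset.Ioi i).map Fin.castSuccEmb) := by
    ext j
    refine Fin.lastCases ?_ (fun j' => ?_) j <;>
      simp [h1, Fin.castSucc_lt_last, Fin.castSucc_lt_castSucc_iff, Fin.castSucc_inj,
        (Fin.castSucc_lt_last _).ne, Fin.le_last]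
  rw [h2, Finset.prod_insert (by simp [h1, (Fin.castSucc_lt_last _).ne]), Finset.prod_map,
    mul_comm]
  rfl

/-- The determinant of the Vandermonde-like matrix `Ψ_l` (columns are powers
`r_i^m` for `m ∈ {0,…,k} \ {k−l}`, in increasing order) equals
`e_l(r) · ∏_{n<m} (r_m − r_n)`. -/
theorem gsd_psi_det (k : ℕ) (r : Fin k → ℂ) (l : ℕ) (hl : l ≤ k) :
    (Matrix.of fun (i : Fin k) (q : Fin k) =>
        r i ^ (if (q : ℕ) < k - l then (q : ℕ) else (q : ℕ) + 1)).det =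
      (∑ t ∈ Finset.powersetCard l (Finset.univ : Finset (Fin k)), ∏ i ∈ t, r i) *
        ∏ i : Fin k, ∏ j ∈ Finset.Ioi i, (r j - r i) := by
  set V : ℂ := ∏ i : Fin k, ∏ j ∈ Finset.Ioi i, (r j - r i) with hV
  set e : ℂ := ∑ t ∈ Finset.powersetCard l (Finset.univ : Finset (Fin k)), ∏ i ∈ t, r i with he
  set D : ℂ := (Matrix.of fun (i : Fin k) (q : Fin k) =>
        r i ^ (if (q : ℕ) < k - l then (q : ℕ) else (q : ℕ) + 1)).det with hD
  set v : Fin (k + 1) → ℂ[X] := Fin.snoc (fun i => C (r i)) X with hv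
  -- Step 1: product form of the big Vandermonde determinant
  have hdetM : (Matrix.vandermonde v).det = C V * ∏ i : Fin k, (X - C (r i)) := by
    rw [Matrix.det_vandermonde, Fin.prod_univ_castSucc]
    have hlast : Finset.Ioi (Fin.last k) = ∅ := by
      ext j; simp [Fin.le_last j, not_lt.mpr (Fin.le_last j)]
    rw [hlast, Finset.prod_empty, mul_one]
    have : ∀ i : Fin k, ∏ j ∈ Finset.Ioi i.castSucc, (v j - v i.castSucc) =
        (∏ j ∈ Finset.Ioi i, (C (r j) - C (r i))) * (X - C (r i)) := by
      intro i
      rw [gsd_prod_Ioi_castSucc i (fun j => v j - v i.castSucc)]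
      simp [hv, Fin.snoc_castSucc, Fin.snoc_last]
    rw [Finset.prod_congr rfl fun i _ => this i, Finset.prod_mul_distrib]
    congr 1
    rw [map_prod]
    exact Finset.prod_congr rfl fun i _ => by rw [map_prod]; simp
  -- Step 2: Laplace expansion along the last row
  have hj0 : k - l < k + 1 := by omega
  set j0 : Fin (k + 1) := ⟨k - l, hj0⟩ with hj0def
  have hexp : ∀ q : Fin k, (j0.succAbove q : ℕ) =
      if (q : ℕ) < k - l then (q : ℕ) else (q : ℕ) + 1 := by
    intro q
    by_cases h : (q : ℕ) < k - l
    · rw [if_pos h, Fin.succAbove, if_pos (by simpa [Fin.lt_def] using h)]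
      rfl
    · rw [if_neg h, Fin.succAbove, if_neg (by rw [Fin.lt_def]; exact h)]
      rfl
  have hcoeff : ((Matrix.vandermonde v).det).coeff (k - l) = (-1 : ℂ) ^ l * D := by
    rw [Matrix.det_succ_row (Matrix.vandermonde v) (Fin.last k)]
    have hterm : ∀ j : Fin (k + 1),
        (-1 : ℂ[X]) ^ ((Fin.last k : ℕ) + (j : ℕ)) * (Matrix.vandermonde v) (Fin.last k) j *
            ((Matrix.vandermonde v).submatrix (Fin.last k).succAbove j.succAbove).det =
          C ((-1 : ℂ) ^ (k + (j : ℕ)) *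
            (Matrix.of fun (p : Fin k) (q : Fin k) => r p ^ (j.succAbove q : ℕ)).det) *
            X ^ (j : ℕ) := by
      intro j
      have hsub : (Matrix.vandermonde v).submatrix (Fin.last k).succAbove j.succAbove =
          (C : ℂ →+* ℂ[X]).mapMatrix
            (Matrix.of fun (p : Fin k) (q : Fin k) => r p ^ (j.succAbove q : ℕ)) := by
        ext p q
        simp [Matrix.vandermonde_apply, Fin.succAbove_last, hv, Fin.snoc_castSucc]
      rw [hsub, ← RingHom.map_det]
      have hX : (Matrix.vandermonde v) (Fin.last k) j = X ^ (j : ℕ) := by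
        simp [Matrix.vandermonde_apply, hv, Fin.snoc_last]
      rw [hX, _root_.map_mul, map_pow, map_neg, _root_.map_one, Fin.val_last]
      ring
    rw [Finset.sum_congr rfl fun j _ => hterm j, Polynomial.finset_sum_coeff]
    rw [Finset.sum_congr rfl fun j _ => Polynomial.coeff_C_mul_X_pow _ _ _]
    rw [Finset.sum_eq_single j0]
    · rw [if_pos rfl]
      have hD' : (Matrix.of fun (p : Fin k) (q : Fin k) => r p ^ (j0.succAbove q : ℕ)).det = D := by
        rw [hD]; congr 1; ext p q; simp only [Matrix.of_apply]; rw [hexp q]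
      rw [hD']
      have hsign : (-1 : ℂ) ^ (k + (j0 : ℕ)) = (-1 : ℂ) ^ l := by
        have h2 : k + (k - l) = 2 * (k - l) + l := by omega
        show (-1 : ℂ) ^ (k + (k - l)) = (-1 : ℂ) ^ l
        rw [h2, pow_add, pow_mul]; norm_num
      rw [hsign]
    · intro j _ hj
      rw [if_neg]
      intro hcontra
      exact hj (Fin.ext (by simpa [hj0def] using hcontra.symm))
    · intro h; exact absurd (Finset.mem_univ j0) h
  -- Step 3: coefficient of the product form
  have hcoeff2 : (C V * ∏ i : Fin k, (X - C (r i))).coeff (k - l) = V * ((-1 : ℂ) ^ l * e) := by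
    rw [Polynomial.coeff_C_mul]
    congr 1
    have hprod : (∏ i : Fin k, (X - C (r i))) =
        ((Finset.univ.val.map r).map fun t => X - C t).prod := by
      rw [Multiset.map_map]; rfl
    have hcard : Multiset.card (Finset.univ.val.map r) = k := by simp
    rw [hprod, Multiset.prod_X_sub_C_coeff _ (by rw [hcard]; omega), hcard]
    have hsub : k - (k - l) = l := by omega
    rw [hsub, Finset.esymm_map_val]
  have hmain : (-1 : ℂ) ^ l * D = (-1 : ℂ) ^ l * (e * V) := by
    rw [← hcoeff, hdetM, hcoeff2]; ring
  exact mul_left_cancel₀ (pow_ne_zero _ (by norm_num)) hmain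
end

section
/- Let s(n) = Σ_{i=1}^{k} a_i r_i^n where the r_i are pairwise distinct and the a_i are nonzero. For l ∈ {0,…,k}, let B_l be the k×k matrix whose columns are the vectors (s(m), s(m+1), …, s(m+k−1))ᵀ for m ∈ {0,…,k} \ {k−l}, in increasing order of m. Then det(B_l) / det(B_0) = e_l(r_1,…,r_k), the l-th elementary symmetric polynomial of the common ratios. In particular det(B_0) ≠ 0. -/
open Polynomial Finset Matrix

lemma prod_Ioi_castSucc' {M : Type*} [CommMonoid M] {n : ℕ} (f : Fin (n+1) → M) (i : Fin n) :
    ∏ j ∈ Finset.Ioi i.castSucc, f j = (∏ j ∈ Finset.Ioi i, f j.castSucc) * f (Fin.last n) := by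
  have h : Finset.Ioi i.castSucc
      = insert (Fin.last n) ((Finset.Ioi i).map Fin.castSuccEmb) := by
    ext j
    induction j using Fin.lastCases with
    | last => simp [Fin.castSucc_lt_last]
    | cast j =>
      simp only [Finset.mem_Ioi, Finset.mem_insert, Finset.mem_map, Fin.castSuccEmb_apply]
      constructor
      · intro hj
        right
        exact ⟨j, by simpa using hj, rfl⟩
      · rintro (h | ⟨j', hj', hjj⟩)
        · exact absurd h (Fin.castSucc_lt_last j).ne
        · have : j' = j := Fin.castSucc_injective _ hjj
          subst this
          simpa using hj'
  rw [h, Finset.prod_insert (by simp only [Finset.mem_map, Fin.castSuccEmb_apply, not_exists, not_and]; exact fun j _ hj => (Fin.castSucc_lt_last j).ne hj), Finset.prod_map, mul_comm]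
  rfl

lemma det_generalized_vandermonde (k l : ℕ) (hl : l ≤ k) (r : Fin k → ℂ) :
    (Matrix.of fun p q : Fin k =>
        r p ^ (if (q : ℕ) < k - l then (q : ℕ) else (q : ℕ) + 1)).det
      = (∑ t ∈ Finset.powersetCard l (Finset.univ : Finset (Fin k)), ∏ i ∈ t, r i)
          * (Matrix.vandermonde r).det := by
  set w : Fin (k + 1) → ℂ[X] := Fin.snoc (fun i => C (r i)) X with hw
  set j0 : Fin (k + 1) := ⟨k - l, by omega⟩ with hj0
  -- factorized form
  have hIoi : Finset.Ioi (Fin.last k) = ∅ := by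
    ext j
    simp [Fin.le_last j, not_lt.mpr (Fin.le_last j)]
  have hfact : (Matrix.vandermonde w).det
      = C (Matrix.vandermonde r).det * ∏ i : Fin k, (X - C (r i)) := by
    rw [Matrix.det_vandermonde, Matrix.det_vandermonde, Fin.prod_univ_castSucc, hIoi]
    simp only [Finset.prod_empty, mul_one]
    have : ∀ i : Fin k, ∏ j ∈ Finset.Ioi i.castSucc, (w j - w i.castSucc)
        = (∏ j ∈ Finset.Ioi i, (C (r j) - C (r i))) * (X - C (r i)) := by
      intro i
      rw [prod_Ioi_castSucc' (fun j => w j - w i.castSucc) i]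
      simp [hw, Fin.snoc_castSucc, Fin.snoc_last]
    rw [Finset.prod_congr rfl fun i _ => this i, Finset.prod_mul_distrib]
    congr 1
    rw [map_prod]
    exact Finset.prod_congr rfl fun i _ => by
      rw [map_prod]
      exact Finset.prod_congr rfl fun j _ => by rw [map_sub]
  -- Laplace expansion along the last row
  have hexp : (Matrix.vandermonde w).det
      = ∑ j : Fin (k + 1), C ((-1 : ℂ) ^ (k + (j : ℕ)) *
          (Matrix.of fun p q : Fin k => r p ^ ((j.succAbove q : ℕ))).det) * X ^ (j : ℕ) := by
    rw [Matrix.det_succ_row (Matrix.vandermonde w) (Fin.last k)]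
    refine Finset.sum_congr rfl fun j _ => ?_
    have h1 : Matrix.vandermonde w (Fin.last k) j = X ^ (j : ℕ) := by
      simp [Matrix.vandermonde, hw, Fin.snoc_last]
    have h2 : (Matrix.vandermonde w).submatrix (Fin.last k).succAbove j.succAbove
        = (C : ℂ →+* ℂ[X]).mapMatrix (Matrix.of fun p q : Fin k => r p ^ ((j.succAbove q : ℕ))) := by
      ext p q
      simp [Matrix.vandermonde, hw, Fin.succAbove_last, Fin.snoc_castSucc]
    rw [h1, h2, ← RingHom.map_det]
    rw [Polynomial.C_mul]
    simp only [map_pow, map_neg, Polynomial.C_1, RingHom.mapMatrix_apply, Fin.val_last]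
    ring
  -- compare coefficients at degree k - l
  have hcoeff := congrArg (fun p : ℂ[X] => p.coeff (k - l)) (hexp.symm.trans hfact)
  -- LHS coefficient
  have hL : (∑ j : Fin (k + 1), C ((-1 : ℂ) ^ (k + (j : ℕ)) *
          (Matrix.of fun p q : Fin k => r p ^ ((j.succAbove q : ℕ))).det) * X ^ (j : ℕ)).coeff (k - l)
      = (-1 : ℂ) ^ (k + (k - l)) *
          (Matrix.of fun p q : Fin k => r p ^ ((j0.succAbove q : ℕ))).det := by
    rw [Polynomial.finset_sum_coeff]
    rw [Finset.sum_eq_single j0]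
    · rw [Polynomial.coeff_C_mul_X_pow]
      simp [hj0]
    · intro j _ hj
      have hne : (k - l) ≠ (j : ℕ) := by
        intro h; exact hj (Fin.ext (by simp [hj0, ← h]))
      rw [Polynomial.coeff_C_mul_X_pow, if_neg hne]
    · simp
  -- RHS coefficient
  have hR : (C (Matrix.vandermonde r).det * ∏ i : Fin k, (X - C (r i))).coeff (k - l)
      = (Matrix.vandermonde r).det * ((-1 : ℂ) ^ l *
          ∑ t ∈ Finset.powersetCard l (Finset.univ : Finset (Fin k)), ∏ i ∈ t, r i) := by
    rw [Polynomial.coeff_C_mul]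
    congr 1
    have hP : (∏ i : Fin k, (X - C (r i)))
        = (((Finset.univ : Finset (Fin k)).val.map r).map fun t => X - C t).prod := by
      rw [Multiset.map_map]
      rfl
    have hle : k - l ≤ Multiset.card ((Finset.univ : Finset (Fin k)).val.map r) := by
      simp
    rw [hP, Multiset.prod_X_sub_C_coeff _ hle]
    have hcard : Multiset.card (((Finset.univ : Finset (Fin k)).val.map r)) = k := by simp
    rw [hcard, show k - (k - l) = l by omega, Finset.esymm_map_val]
  rw [hL, hR] at hcoeff
  -- identify succAbove with the if-expression
  have hsA : ∀ q : Fin k, ((j0.succAbove q : ℕ))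
      = if (q : ℕ) < k - l then (q : ℕ) else (q : ℕ) + 1 := by
    intro q
    simp only [Fin.succAbove, hj0]
    split_ifs with h1 h2 h2
    · rfl
    · exact absurd (by simpa [Fin.lt_iff_val_lt_val] using h1) h2
    · exact absurd (by simpa [Fin.lt_iff_val_lt_val] using h2) h1
    · rfl
  have hsign : (-1 : ℂ) ^ (k + (k - l)) = (-1 : ℂ) ^ l := by
    rw [show k + (k - l) = l + 2 * (k - l) by omega, pow_add, pow_mul]
    simp
  have hmat : (Matrix.of fun p q : Fin k => r p ^ ((j0.succAbove q : ℕ)))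
      = Matrix.of fun p q : Fin k =>
          r p ^ (if (q : ℕ) < k - l then (q : ℕ) else (q : ℕ) + 1) := by
    ext p q
    rw [Matrix.of_apply, Matrix.of_apply, hsA q]
  rw [hsign, hmat] at hcoeff
  have hneg : ((-1 : ℂ) ^ l) ≠ 0 := by
    simp [pow_ne_zero]
  exact mul_left_cancel₀ hneg (hcoeff.trans (by ring))

/-- Theorem 2 (consecutive samples): the determinant quotients of the combinatorial
matrices `B_l` equal the elementary symmetric polynomials of the common ratios. -/
theorem gsd_volume_quotients (k : ℕ) (a r : Fin k → ℂ)
    (hr : Function.Injective r) (ha : ∀ i, a i ≠ 0)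
    (s : ℕ → ℂ) (hs : ∀ n, s n = ∑ i : Fin k, a i * r i ^ n)
    (B : ℕ → Matrix (Fin k) (Fin k) ℂ)
    (hB : ∀ l, B l = Matrix.of fun (p : Fin k) (q : Fin k) =>
      s ((if (q : ℕ) < k - l then (q : ℕ) else (q : ℕ) + 1) + (p : ℕ)))
    (l : ℕ) (hl : l ≤ k) :
    (B l).det / (B 0).det =
      (∑ t ∈ Finset.powersetCard l (Finset.univ : Finset (Fin k)), ∏ i ∈ t, r i) ∧
    (B 0).det ≠ 0 := by
  have hVne : (Matrix.vandermonde r).det ≠ 0 :=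
    Matrix.det_vandermonde_ne_zero_iff.mpr hr
  have hAne : (∏ i, a i) ≠ 0 := Finset.prod_ne_zero_iff.mpr fun i _ => ha i
  have hfac : ∀ m, m ≤ k → (B m).det = (Matrix.vandermonde r).det * (∏ i, a i) *
      ((∑ t ∈ Finset.powersetCard m (Finset.univ : Finset (Fin k)), ∏ i ∈ t, r i) *
        (Matrix.vandermonde r).det) := by
    intro m hm
    have hBm : B m = (Matrix.vandermonde r)ᵀ * (Matrix.diagonal a *
        (Matrix.of fun i q : Fin k =>
          r i ^ (if (q : ℕ) < k - m then (q : ℕ) else (q : ℕ) + 1))) := by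
      rw [hB m]
      ext p q
      simp only [Matrix.mul_apply, Matrix.transpose_apply, Matrix.vandermonde,
        Matrix.of_apply, hs, Matrix.diagonal_mul]
      refine Finset.sum_congr rfl fun i _ => ?_
      rw [Finset.sum_eq_single i
        (fun x _ hx => by rw [Matrix.diagonal_apply_ne a (Ne.symm hx), zero_mul])
        (by simp)]
      rw [Matrix.diagonal_apply_eq]
      ring
    rw [hBm, Matrix.det_mul, Matrix.det_mul, Matrix.det_transpose,
      Matrix.det_diagonal, det_generalized_vandermonde k m hm r]
    ring
  have h0 : (∑ t ∈ Finset.powersetCard 0 (Finset.univ : Finset (Fin k)), ∏ i ∈ t, r i)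
      = 1 := by simp
  have hB0 : (B 0).det = (Matrix.vandermonde r).det * (∏ i, a i) *
      (1 * (Matrix.vandermonde r).det) := by rw [hfac 0 (Nat.zero_le k), h0]
  constructor
  · rw [hfac l hl, hB0]
    field_simp
  · rw [hB0]
    simp only [one_mul]
    exact mul_ne_zero (mul_ne_zero hVne hAne) hVne
end

section
/- Let s(n) = Σ_{i=1}^{k} a_i r_i^n with r_i pairwise distinct and a_i nonzero, and let v_l = det(B_l)/det(B_0) for l = 0,…,k, where B_l is as in Theorem 2 (so v_l = e_l(r_1,…,r_k)). Then the polynomial Σ_{n=0}^{k} (−1)^{k−n} v_{k−n} X^n equals ∏_{i=1}^{k} (X − r_i); hence its roots are exactly the common ratios r_1, …, r_k. -/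
open Polynomial Matrix Finset

lemma Ioi_castSucc_eq {k : ℕ} (i : Fin k) :
    Finset.Ioi (Fin.castSucc i) =
      insert (Fin.last k) ((Finset.Ioi i).map (Fin.castSuccEmb)) := by
  ext j
  simp only [Finset.mem_Ioi, Finset.mem_insert, Finset.mem_map, Fin.castSuccEmb,
    Function.Embedding.coeFn_mk, Fin.lt_def, Fin.castSucc, Fin.castAdd, Fin.castLE]
  constructor
  · intro h
    rcases eq_or_lt_of_le (Nat.lt_succ_iff.mp j.isLt) with hj | hj
    · left; exact Fin.ext (by simpa [Fin.last] using hj)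
    · right
      exact ⟨⟨j, hj⟩, h, by simp [Fin.ext_iff]⟩
  · rintro (rfl | ⟨m, hm, rfl⟩)
    · simpa [Fin.last] using i.isLt
    · simpa using hm

lemma det_vandermonde_snoc {R : Type*} [CommRing R] {k : ℕ} (f : Fin k → R) (x : R) :
    (Matrix.vandermonde (Fin.snoc f x : Fin (k + 1) → R)).det =
      (Matrix.vandermonde f).det * ∏ i : Fin k, (x - f i) := by
  rw [Matrix.det_vandermonde, Matrix.det_vandermonde, Fin.prod_univ_castSucc]
  have hlast : ∏ j ∈ Finset.Ioi (Fin.last k), ((Fin.snoc f x : Fin (k+1) → R) j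
      - (Fin.snoc f x : Fin (k+1) → R) (Fin.last k)) = 1 := by
    have : Finset.Ioi (Fin.last k) = ∅ := by
      ext j; simp [Fin.lt_def, Nat.lt_succ_iff, Fin.le_def, Fin.last]
      exact Nat.lt_succ_iff.mp j.isLt
    simp [this]
  rw [hlast, mul_one]
  have : ∀ i : Fin k, (∏ j ∈ Finset.Ioi (Fin.castSucc i),
      ((Fin.snoc f x : Fin (k+1) → R) j - (Fin.snoc f x : Fin (k+1) → R) (Fin.castSucc i)))
      = (x - f i) * ∏ j ∈ Finset.Ioi i, (f j - f i) := by
    intro i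
    rw [Ioi_castSucc_eq, Finset.prod_insert (by
      simp only [Finset.mem_map, not_exists]
      rintro m ⟨_, hm⟩
      exact absurd (congrArg Fin.val hm) (by simp [Fin.castSuccEmb, Fin.last]; omega))]
    rw [Finset.prod_map]
    simp only [Fin.snoc_last]
    congr 1
    · rw [Fin.snoc_castSucc]
    exact Finset.prod_congr rfl fun j _ => by
      have h1 : (Fin.castSuccEmb j : Fin (k+1)) = Fin.castSucc j := rfl
      rw [h1, Fin.snoc_castSucc, Fin.snoc_castSucc]
  have h2 : (∏ i : Fin k, ∏ j ∈ Finset.Ioi (Fin.castSucc i),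
        ((Fin.snoc f x : Fin (k+1) → R) j - (Fin.snoc f x : Fin (k+1) → R) (Fin.castSucc i)))
      = ∏ i : Fin k, ((x - f i) * ∏ j ∈ Finset.Ioi i, (f j - f i)) :=
    Finset.prod_congr rfl fun i _ => this i
  rw [h2, Finset.prod_mul_distrib, mul_comm]



/-- Equation (24): the polynomial built from the volume quotients
`v_l = det(B_l)/det(B_0)` equals `∏ i (X − r_i)`, so its roots are the ratios. -/
theorem gsd_polynomial_from_quotients (k : ℕ) (a r : Fin k → ℂ)
    (hr : Function.Injective r) (ha : ∀ i, a i ≠ 0)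
    (s : ℕ → ℂ) (hs : ∀ n, s n = ∑ i : Fin k, a i * r i ^ n)
    (B : ℕ → Matrix (Fin k) (Fin k) ℂ)
    (hB : ∀ l, B l = Matrix.of fun (p : Fin k) (q : Fin k) =>
      s ((if (q : ℕ) < k - l then (q : ℕ) else (q : ℕ) + 1) + (p : ℕ)))
    (v : ℕ → ℂ) (hv : ∀ l, v l = (B l).det / (B 0).det) :
    (∑ n ∈ Finset.range (k + 1),
        Polynomial.C ((-1 : ℂ) ^ (k - n) * v (k - n)) * Polynomial.X ^ n) =
      ∏ i : Fin k, (Polynomial.X - Polynomial.C (r i)) := by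
  classical
  set V : Matrix (Fin k) (Fin k) ℂ := Matrix.vandermonde r with hVdef
  have hVd : V.det ≠ 0 := Matrix.det_vandermonde_ne_zero_iff.mpr hr
  have hprod_a : (∏ i, a i) ≠ 0 := Finset.prod_ne_zero_iff.mpr fun i _ => ha i
  -- B 0 factorization
  have hB0 : (B 0).det = V.det * ((∏ i, a i) * V.det) := by
    have e : B 0 = Vᵀ * (Matrix.diagonal a * V) := by
      rw [hB 0]
      ext p q
      have hq : (q : ℕ) < k - 0 := by omega
      simp only [Matrix.of_apply, Matrix.mul_apply, Matrix.transpose_apply,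
        Matrix.diagonal_mul, Matrix.vandermonde_apply, hs, if_pos hq, hVdef]
      refine Finset.sum_congr rfl fun i _ => ?_
      rw [show (∑ x : Fin k, Matrix.diagonal a i x * r x ^ (q : ℕ)) = a i * r i ^ (q : ℕ) by
        simp [Matrix.diagonal_apply, ite_mul, Finset.sum_ite_eq, Finset.mem_univ]]
      rw [pow_add]; ring
    rw [e, Matrix.det_mul, Matrix.det_mul, Matrix.det_transpose, Matrix.det_diagonal]
  have hB0ne : (B 0).det ≠ 0 := by
    rw [hB0]; exact mul_ne_zero hVd (mul_ne_zero hprod_a hVd)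
  -- matrices over ℂ[X]
  set g : Fin (k+1) → Polynomial ℂ :=
    Fin.snoc (fun i => Polynomial.C (r i)) Polynomial.X with hg
  set U : Matrix (Fin (k+1)) (Fin (k+1)) (Polynomial ℂ) := Matrix.vandermonde g with hU
  set W : Matrix (Fin (k+1)) (Fin (k+1)) (Polynomial ℂ) := Matrix.of fun p i =>
    Fin.lastCases (Fin.lastCases 1 (fun _ => 0) i)
      (fun p' => Fin.lastCases 0 (fun i' => Polynomial.C (a i' * r i' ^ (p' : ℕ))) i) p
    with hW
  set M : Matrix (Fin (k+1)) (Fin (k+1)) (Polynomial ℂ) := W * U with hM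
  have hMcast : ∀ (p' : Fin k) (q : Fin (k+1)),
      M (Fin.castSucc p') q = Polynomial.C (s ((q : ℕ) + (p' : ℕ))) := by
    intro p' q
    rw [hM, Matrix.mul_apply, Fin.sum_univ_castSucc]
    simp only [hW, hU, Matrix.of_apply, Fin.lastCases_castSucc, Fin.lastCases_last,
      Matrix.vandermonde_apply, zero_mul, add_zero]
    rw [hs, map_sum]
    refine Finset.sum_congr rfl fun i _ => ?_
    rw [hg, Fin.snoc_castSucc, ← Polynomial.C_pow, ← Polynomial.C_mul, pow_add]
    ring_nf
  have hMlast : ∀ q : Fin (k+1), M (Fin.last k) q = Polynomial.X ^ (q : ℕ) := by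
    intro q
    rw [hM, Matrix.mul_apply, Fin.sum_univ_castSucc]
    simp only [hW, hU, Matrix.of_apply, Fin.lastCases_castSucc, Fin.lastCases_last,
      Matrix.vandermonde_apply, zero_mul, one_mul]
    rw [hg, Fin.snoc_last]
    simp
  -- det U
  have hUdet : U.det = Polynomial.C V.det * ∏ i : Fin k, (Polynomial.X - Polynomial.C (r i)) := by
    rw [hU, hg, det_vandermonde_snoc]
    congr 1
    have e : Matrix.vandermonde (fun i => Polynomial.C (r i))
        = (Polynomial.C : ℂ →+* Polynomial ℂ).mapMatrix V := by
      ext i j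
      simp [Matrix.vandermonde_apply, hVdef, map_pow]
    rw [e, ← RingHom.map_det]
  -- det W
  have hWdet : W.det = Polynomial.C ((∏ i, a i) * V.det) := by
    rw [Matrix.det_succ_row W (Fin.last k)]
    rw [Finset.sum_eq_single (Fin.last k)]
    · have hsub : W.submatrix (Fin.last k).succAbove (Fin.last k).succAbove
          = (Polynomial.C : ℂ →+* Polynomial ℂ).mapMatrix (Vᵀ * Matrix.diagonal a) := by
        ext p i
        rw [Fin.succAbove_last]
        simp only [Matrix.submatrix_apply, hW, Matrix.of_apply, Fin.lastCases_castSucc,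
          RingHom.mapMatrix_apply, Matrix.map_apply, Matrix.mul_diagonal,
          Matrix.transpose_apply, Matrix.vandermonde_apply, hVdef]
        rw [mul_comm]
      rw [hsub, ← RingHom.map_det, Matrix.det_mul, Matrix.det_transpose, Matrix.det_diagonal]
      have hWll : W (Fin.last k) (Fin.last k) = 1 := by simp [hW]
      rw [hWll, Fin.val_last, show k + k = 2 * k from (two_mul k).symm, pow_mul]
      norm_num
      exact mul_comm _ _
    · intro j _ hj
      obtain ⟨j', rfl⟩ := Fin.exists_castSucc_eq.mpr hj
      simp [hW, Fin.lastCases_last, Fin.lastCases_castSucc]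
    · simp
  -- cofactor expansion of det M along the last row
  have hdet1 : M.det = ∑ j : Fin (k+1),
      (-1 : Polynomial ℂ) ^ (k + (j : ℕ)) * Polynomial.X ^ (j : ℕ)
        * Polynomial.C ((B (k - (j : ℕ))).det) := by
    rw [Matrix.det_succ_row M (Fin.last k)]
    refine Finset.sum_congr rfl fun j _ => ?_
    rw [hMlast]
    have hminor : M.submatrix (Fin.last k).succAbove j.succAbove
        = (Polynomial.C : ℂ →+* Polynomial ℂ).mapMatrix (B (k - (j : ℕ))) := by
      ext p q
      rw [Fin.succAbove_last]
      simp only [Matrix.submatrix_apply, hMcast, RingHom.mapMatrix_apply, Matrix.map_apply,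
        hB (k - (j : ℕ)), Matrix.of_apply]
      congr 2
      have hj : (j : ℕ) ≤ k := Nat.lt_succ_iff.mp j.isLt
      have hkk : k - (k - (j : ℕ)) = (j : ℕ) := by omega
      rw [hkk]
      rcases lt_or_ge ((q : ℕ)) ((j : ℕ)) with h | h
      · rw [Fin.succAbove_of_castSucc_lt _ _ (by simpa [Fin.lt_def] using h)]
        simp [h]
      · rw [Fin.succAbove_of_le_castSucc _ _ (by simpa [Fin.le_def] using h)]
        simp [Fin.val_succ, Nat.not_lt.mpr h]
    rw [hminor, ← RingHom.map_det]
    simp [Fin.val_last]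
  -- det M the other way
  have hdet2 : M.det = Polynomial.C ((B 0).det)
      * ∏ i : Fin k, (Polynomial.X - Polynomial.C (r i)) := by
    rw [hM, Matrix.det_mul, hWdet, hUdet, hB0, ← mul_assoc, ← Polynomial.C_mul]
    ring_nf
  -- conclude
  have hCne : (Polynomial.C ((B 0).det) : Polynomial ℂ) ≠ 0 := by
    simpa using hB0ne
  apply mul_left_cancel₀ hCne
  rw [← hdet2, hdet1]
  rw [Finset.mul_sum]
  rw [show (∑ j : Fin (k+1), (-1 : Polynomial ℂ) ^ (k + (j : ℕ)) * Polynomial.X ^ (j : ℕ)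
        * Polynomial.C ((B (k - (j : ℕ))).det))
      = ∑ n ∈ Finset.range (k+1), (-1 : Polynomial ℂ) ^ (k + n) * Polynomial.X ^ n
        * Polynomial.C ((B (k - n)).det) from
    Fin.sum_univ_eq_sum_range (fun n => (-1 : Polynomial ℂ) ^ (k + n) * Polynomial.X ^ n
        * Polynomial.C ((B (k - n)).det)) (k+1)]
  refine Finset.sum_congr rfl fun n hn => ?_
  have hn' : n ≤ k := Nat.lt_succ_iff.mp (Finset.mem_range.mp hn)
  have hsign : ((-1 : Polynomial ℂ)) ^ (k + n) = (-1 : Polynomial ℂ) ^ (k - n) := by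
    rw [show k + n = (k - n) + 2 * n by omega, pow_add, pow_mul]
    simp
  rw [hsign, hv]
  rw [← mul_assoc, ← Polynomial.C_mul]
  rw [show (B 0).det * ((-1 : ℂ) ^ (k - n) * ((B (k - n)).det / (B 0).det))
      = (-1 : ℂ) ^ (k - n) * (B (k - n)).det by field_simp]
  rw [Polynomial.C_mul]
  rw [show (Polynomial.C ((-1 : ℂ) ^ (k - n)) : Polynomial ℂ) = (-1 : Polynomial ℂ) ^ (k - n) by
    simp]
  ring
end

section
/- Let r_1, …, r_k ∈ ℂ be pairwise distinct and nonzero, let ρ_1, …, ρ_m ∈ ℂ be pairwise distinct and nonzero with m ≤ k, and let a_i, b_j be nonzero complex numbers. If Σ_{i=1}^{k} a_i r_i^n = Σ_{j=1}^{m} b_j ρ_j^n for all n ∈ {0, 1, …, k+m−1}, then m = k and there is a permutation σ of {1,…,k} with ρ_{σ(i)} = r_i and b_{σ(i)} = a_i for all i. -/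
open Finset

/-- Vandermonde: if a coefficient vector annihilates powers, it's zero. -/
lemma vand_zero {N : ℕ} (v c : Fin N → ℂ) (hv : Function.Injective v)
    (h : ∀ n < N, ∑ i, c i * v i ^ n = 0) : ∀ i, c i = 0 := by
  have := Matrix.eq_zero_of_forall_pow_sum_mul_pow_eq_zero (f := v) (v := c) hv
    (fun i => h i i.isLt)
  intro i; exact congrFun this i

/-- Identifiability: two superpositions of geometric sequences with distinct
nonzero ratios and nonzero initial terms agreeing on the first `k+m` samples
coincide up to a permutation, and in particular have the same number of terms. -/
theorem gsd_identifiability (k m : ℕ) (hm : m ≤ k)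
    (r : Fin k → ℂ) (ρ : Fin m → ℂ) (a : Fin k → ℂ) (b : Fin m → ℂ)
    (hr : Function.Injective r) (hρ : Function.Injective ρ)
    (hr0 : ∀ i, r i ≠ 0) (hρ0 : ∀ j, ρ j ≠ 0)
    (ha : ∀ i, a i ≠ 0) (hb : ∀ j, b j ≠ 0)
    (h : ∀ n < k + m, ∑ i : Fin k, a i * r i ^ n = ∑ j : Fin m, b j * ρ j ^ n) :
    m = k ∧ ∃ σ : Fin k ≃ Fin m, ∀ i, ρ (σ i) = r i ∧ b (σ i) = a i := by
  classical
  set T : Finset ℂ := (Finset.univ.image r) ∪ (Finset.univ.image ρ) with hT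
  set c : ℂ → ℂ := fun x =>
    (∑ i ∈ Finset.univ.filter (fun i => r i = x), a i)
      - ∑ j ∈ Finset.univ.filter (fun j => ρ j = x), b j with hc
  -- summing c x * x^n over T recovers the difference of the two sums
  have hsum : ∀ n < k + m, ∑ x ∈ T, c x * x ^ n = 0 := by
    intro n hn
    have h1 : ∑ x ∈ T, (∑ i ∈ Finset.univ.filter (fun i => r i = x), a i) * x ^ n
        = ∑ i : Fin k, a i * r i ^ n := by
      rw [← Finset.sum_fiberwise_of_maps_to (g := r) (fun i _ =>
        Finset.mem_union_left _ (Finset.mem_image_of_mem r (Finset.mem_univ i)))]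
      refine Finset.sum_congr rfl fun x _ => ?_
      rw [Finset.sum_mul]
      refine Finset.sum_congr rfl fun i hi => ?_
      simp only [Finset.mem_filter] at hi
      rw [hi.2]
    have h2 : ∑ x ∈ T, (∑ j ∈ Finset.univ.filter (fun j => ρ j = x), b j) * x ^ n
        = ∑ j : Fin m, b j * ρ j ^ n := by
      rw [← Finset.sum_fiberwise_of_maps_to (g := ρ) (fun j _ =>
        Finset.mem_union_right _ (Finset.mem_image_of_mem ρ (Finset.mem_univ j)))]
      refine Finset.sum_congr rfl fun x _ => ?_
      rw [Finset.sum_mul]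
      refine Finset.sum_congr rfl fun j hj => ?_
      simp only [Finset.mem_filter] at hj
      rw [hj.2]
    simp only [hc, sub_mul, Finset.sum_sub_distrib, h1, h2, h n hn, sub_self]
  -- T has at most k + m elements
  have hcard : T.card ≤ k + m := by
    refine le_trans (Finset.card_union_le _ _) ?_
    have := Finset.card_image_le (s := (Finset.univ : Finset (Fin k))) (f := r)
    have := Finset.card_image_le (s := (Finset.univ : Finset (Fin m))) (f := ρ)
    simp only [Finset.card_univ, Fintype.card_fin] at *
    omega
  -- apply Vandermonde on an enumeration of T
  have hczero : ∀ x ∈ T, c x = 0 := by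
    set N := T.card with hN
    set e : Fin N ≃ T := T.equivFin.symm with he
    have hv : Function.Injective (fun i : Fin N => (e i : ℂ)) :=
      Subtype.coe_injective.comp e.injective
    have hz : ∀ n < N, ∑ i : Fin N, c (e i) * (e i : ℂ) ^ n = 0 := by
      intro n hn
      calc ∑ i : Fin N, c (e i) * (e i : ℂ) ^ n
          = ∑ x : T, c x * (x : ℂ) ^ n := Equiv.sum_comp e (fun x : T => c x * (x : ℂ) ^ n)
        _ = ∑ x ∈ T, c x * x ^ n := Finset.sum_coe_sort T (fun x => c x * x ^ n)
        _ = 0 := hsum n (lt_of_lt_of_le hn hcard)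
    have := vand_zero _ (fun i => c (e i)) hv hz
    intro x hx
    have := this (e.symm ⟨x, hx⟩)
    simpa using this
  -- each r i must appear among the ρ's with matching coefficient
  have key : ∀ i : Fin k, ∃ j : Fin m, ρ j = r i ∧ b j = a i := by
    intro i
    have hri : r i ∈ T := by simp [hT]
    have h0 := hczero (r i) hri
    have hfr : Finset.univ.filter (fun i' => r i' = r i) = {i} := by
      ext i'; simp [hr.eq_iff]
    rw [hc] at h0
    simp only [hfr, Finset.sum_singleton] at h0
    have hsumb : ∑ j ∈ Finset.univ.filter (fun j => ρ j = r i), b j = a i := by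
      linear_combination -h0
    by_cases hne : (Finset.univ.filter (fun j => ρ j = r i)).Nonempty
    · obtain ⟨j, hj⟩ := hne
      simp only [Finset.mem_filter, Finset.mem_univ, true_and] at hj
      have hfρ : Finset.univ.filter (fun j' => ρ j' = r i) = {j} := by
        ext j'; simp only [Finset.mem_filter, Finset.mem_univ, true_and,
          Finset.mem_singleton]
        constructor
        · intro hj'; exact hρ (hj'.trans hj.symm)
        · intro hj'; rw [hj']; exact hj
      rw [hfρ, Finset.sum_singleton] at hsumb
      exact ⟨j, hj, hsumb⟩
    · rw [Finset.not_nonempty_iff_eq_empty] at hne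
      rw [hne, Finset.sum_empty] at hsumb
      exact absurd hsumb.symm (ha i)
  choose f hf1 hf2 using key
  have hfinj : Function.Injective f := by
    intro i i' hii
    apply hr
    rw [← hf1 i, ← hf1 i', hii]
  have hkm : k ≤ m := by
    have := Fintype.card_le_of_injective f hfinj
    simpa using this
  have hmk : m = k := le_antisymm hm hkm
  refine ⟨hmk, ?_⟩
  have hbij : Function.Bijective f := by
    rw [Fintype.bijective_iff_injective_and_card]
    exact ⟨hfinj, by simp [hmk]⟩
  exact ⟨Equiv.ofBijective f hbij, fun i => ⟨hf1 i, hf2 i⟩⟩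
end
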